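/- Let n ≥ 2 and let f : ℝⁿ → ℝ be continuous and Lebesgue integrable with α := ∫_{ℝⁿ} max(f,0) dx < c_n and β := ∫_{ℝⁿ} max(−f,0) dx < ∞, such that y ↦ log(|y|/|x−y|) f(y) is Lebesgue integrable for every x ∈ ℝⁿ. Set u(x) := (1/c_n) ∫_{ℝⁿ} log(|y|/|x−y|) f(y) dy. Then there exist p > 1 and a constant K, both depending only on n, α and β, such that e^{n u} is an A_p weight with constant K: for every ball B ⊆ ℝⁿ, ((1/|B|) ∫_B e^{n u(x)} dx) · ((1/|B|) ∫_B e^{−n u(x)/(p−1)} dx)^{p−1} ≤ K. -/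

import Mathlib

open MeasureTheory Metric Set
open scoped ENNReal

/-- `c_n := 2^{n-2} Γ(n/2) π^{n/2}`. -/
noncomputable def cN (n : ℕ) : ℝ :=
  (2 : ℝ) ^ ((n : ℝ) - 2) * Real.Gamma ((n : ℝ) / 2) * Real.pi ^ ((n : ℝ) / 2)

/-- Logarithmic potential `u(x) = (1/c_n) ∫ log(|y|/|x-y|) f(y) dy`. -/
noncomputable def logPot (n : ℕ) (f : EuclideanSpace ℝ (Fin n) → ℝ)
    (x : EuclideanSpace ℝ (Fin n)) : ℝ :=
  (1 / cN n) * ∫ y, Real.log (‖y‖ / ‖x - y‖) * f y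

/-- `ω` is an `A_p` weight with constant `K` (for `p > 1`):
for every ball `B`, `(⨍_B ω) · (⨍_B ω^{-1/(p-1)})^{p-1} ≤ K`. -/
def IsApWeight (n : ℕ) (p K : ℝ) (ω : EuclideanSpace ℝ (Fin n) → ℝ) : Prop :=
  ∀ (x : EuclideanSpace ℝ (Fin n)) (r : ℝ), 0 < r →
    ((volume (ball x r)).toReal⁻¹ * ∫ y in ball x r, ω y) *
      ((volume (ball x r)).toReal⁻¹ *
        ∫ y in ball x r, (ω y) ^ (-(1 / (p - 1)) : ℝ)) ^ (p - 1) ≤ K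

/-- `δ_ω(x,y) = (∫_{B_{xy}} ω)^{1/n}`, where `B_{xy}` is the closed ball with
center `(x+y)/2` and radius `|x-y|/2`. -/
noncomputable def deltaW (n : ℕ) (ω : EuclideanSpace ℝ (Fin n) → ℝ)
    (x y : EuclideanSpace ℝ (Fin n)) : ℝ :=
  (∫ z in closedBall (midpoint ℝ x y) (dist x y / 2), ω z) ^ ((1 : ℝ) / n)

/-- `d_ω(x,y)`: infimum of `∫₀^L ω(γ(t))^{1/n} dt` over all `L ≥ 0` and all
1-Lipschitz curves `γ : [0,L] → ℝⁿ` joining `x` to `y` inside `B_{xy}`. -/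
noncomputable def dW (n : ℕ) (ω : EuclideanSpace ℝ (Fin n) → ℝ)
    (x y : EuclideanSpace ℝ (Fin n)) : ℝ :=
  sInf {d : ℝ | ∃ (L : ℝ) (γ : ℝ → EuclideanSpace ℝ (Fin n)),
    0 ≤ L ∧ LipschitzOnWith 1 γ (Set.Icc 0 L) ∧ γ 0 = x ∧ γ L = y ∧
    (∀ t ∈ Set.Icc 0 L, γ t ∈ closedBall (midpoint ℝ x y) (dist x y / 2)) ∧
    d = ∫ t in (0 : ℝ)..L, (ω (γ t)) ^ ((1 : ℝ) / n)}

/-- One-dimensional Hausdorff content: infimum of `Σᵢ diam Bᵢ` over countable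
covers of `E` by balls `Bᵢ`. -/
noncomputable def H1content {n : ℕ} (E : Set (EuclideanSpace ℝ (Fin n))) : ℝ≥0∞ :=
  ⨅ (c : ℕ → EuclideanSpace ℝ (Fin n) × ℝ) (_ : E ⊆ ⋃ i, ball (c i).1 (c i).2),
    ∑' i, ENNReal.ofReal (2 * (c i).2)

lemma cN_pos {n : ℕ} (hn : 1 ≤ n) : 0 < cN n := by
  have h1 : (0:ℝ) < (n:ℝ) / 2 := by positivity
  have := Real.Gamma_pos_of_pos h1
  have h2 : (0:ℝ) < (2:ℝ) ^ ((n : ℝ) - 2) := Real.rpow_pos_of_pos (by norm_num) _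
  have h3 : (0:ℝ) < Real.pi ^ ((n : ℝ) / 2) := Real.rpow_pos_of_pos Real.pi_pos _
  exact mul_pos (mul_pos h2 this) h3

/-- Constant controlling `∫_{B(c,r)} (3r/|x-y|)^s dx ≤ (1 + Cker n s)|B|`. -/
noncomputable def Cker (n : ℕ) (s : ℝ) : ℝ :=
  (3:ℝ) ^ n * ((2:ℝ) ^ s / (1 - (2:ℝ) ^ (s - (n:ℝ))))

lemma two_rpow_sub_lt_one {n : ℕ} {s : ℝ} (hsn : s < n) : (2:ℝ) ^ (s - (n:ℝ)) < 1 :=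
  Real.rpow_lt_one_of_one_lt_of_neg (by norm_num) (by linarith)

lemma Cker_nonneg {n : ℕ} {s : ℝ} (hsn : s < n) : 0 ≤ Cker n s := by
  have h1 := two_rpow_sub_lt_one (n := n) hsn
  have h2 : (0:ℝ) ≤ (2:ℝ) ^ s := Real.rpow_nonneg (by norm_num) _
  have h3 : (0:ℝ) < 1 - (2:ℝ) ^ (s - (n:ℝ)) := by linarith
  have : (0:ℝ) ≤ (3:ℝ) ^ n := by positivity
  exact mul_nonneg this (div_nonneg h2 h3.le)

/-- Dyadic decomposition bound for the kernel `(R/|z-y|)^s`, `0 ≤ s < n`. -/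
lemma kernel_lintegral_le (n : ℕ) (hn : 1 ≤ n) {s : ℝ} (hs0 : 0 ≤ s) (hsn : s < n)
    {R : ℝ} (hR : 0 < R) (y c : EuclideanSpace ℝ (Fin n)) (ρ : ℝ) :
    ∫⁻ z in ball c ρ, ENNReal.ofReal ((R / ‖z - y‖) ^ s) ≤
      volume (ball c ρ) +
        ENNReal.ofReal ((2:ℝ) ^ s / (1 - (2:ℝ) ^ (s - (n:ℝ))) * R ^ n) *
          volume (ball (0 : EuclideanSpace ℝ (Fin n)) 1) := by
  have hq1 : (2:ℝ) ^ (s - (n:ℝ)) < 1 := two_rpow_sub_lt_one hsn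
  have hq0 : (0:ℝ) ≤ (2:ℝ) ^ (s - (n:ℝ)) := Real.rpow_nonneg (by norm_num) _
  set g : EuclideanSpace ℝ (Fin n) → ℝ≥0∞ :=
    fun z => ENNReal.ofReal ((R / ‖z - y‖) ^ s) with hg
  set A : ℕ → Set (EuclideanSpace ℝ (Fin n)) :=
    fun k => ball y (R * (2:ℝ)⁻¹ ^ k) \ ball y (R * (2:ℝ)⁻¹ ^ (k+1)) with hA
  -- cover
  have hcover : ball c ρ ⊆ (ball c ρ \ ball y R) ∪ (({y} : Set _) ∪ ⋃ k, A k) := by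
    intro z hz
    by_cases hzy : z ∈ ball y R
    · right
      by_cases hz0 : z = y
      · exact Or.inl (by simp [hz0])
      · refine Or.inr ?_
        have hd : 0 < dist z y := dist_pos.2 hz0
        have hdR : dist z y < R := mem_ball.1 hzy
        have hex : ∃ m : ℕ, R * (2:ℝ)⁻¹ ^ (m+1) ≤ dist z y := by
          obtain ⟨m, hm⟩ := exists_pow_lt_of_lt_one (x := dist z y / R) (y := (2:ℝ)⁻¹)
            (by positivity) (by norm_num)
          refine ⟨m, ?_⟩
          have : R * (2:ℝ)⁻¹ ^ m < dist z y := by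
            rw [mul_comm]
            exact (lt_div_iff₀ hR).1 hm
          have h2 : R * (2:ℝ)⁻¹ ^ (m+1) ≤ R * (2:ℝ)⁻¹ ^ m := by
            apply mul_le_mul_of_nonneg_left _ hR.le
            exact pow_le_pow_of_le_one (by norm_num) (by norm_num) (by omega)
          linarith
        classical
        set k := Nat.find hex with hk
        have hk1 : R * (2:ℝ)⁻¹ ^ (k+1) ≤ dist z y := Nat.find_spec hex
        have hk2 : dist z y < R * (2:ℝ)⁻¹ ^ k := by
          rcases Nat.eq_zero_or_pos k with h0 | hpos
          · simpa [h0] using hdR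
          · have := Nat.find_min hex (m := k - 1) (by omega)
            push_neg at this
            have hk' : k - 1 + 1 = k := by omega
            rwa [hk'] at this
        exact mem_iUnion.2 ⟨k, ⟨mem_ball.2 hk2, fun h => absurd (mem_ball.1 h) (not_lt.2 hk1)⟩⟩
    · exact Or.inl ⟨hz, hzy⟩
  calc ∫⁻ z in ball c ρ, g z
      ≤ ∫⁻ z in (ball c ρ \ ball y R) ∪ (({y} : Set _) ∪ ⋃ k, A k), g z :=
        lintegral_mono_set hcover
    _ ≤ (∫⁻ z in ball c ρ \ ball y R, g z) + ∫⁻ z in ({y} : Set _) ∪ ⋃ k, A k, g z :=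
        lintegral_union_le _ _ _
    _ ≤ volume (ball c ρ) +
        ENNReal.ofReal ((2:ℝ) ^ s / (1 - (2:ℝ) ^ (s - (n:ℝ))) * R ^ n) *
          volume (ball (0 : EuclideanSpace ℝ (Fin n)) 1) := by
      gcongr
      · -- far part: integrand ≤ 1
        calc ∫⁻ z in ball c ρ \ ball y R, g z
            ≤ ∫⁻ _ in ball c ρ \ ball y R, 1 := by
              apply setLIntegral_mono' (measurableSet_ball.diff measurableSet_ball)
              intro z hz
              have hzy : R ≤ dist z y := not_lt.1 fun h => hz.2 (mem_ball.2 h)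
              have hd0 : (0:ℝ) < dist z y := lt_of_lt_of_le hR hzy
              have hbase : R / ‖z - y‖ ≤ 1 := by
                rw [← dist_eq_norm]
                rw [div_le_one hd0]
                exact hzy
              have : (R / ‖z - y‖) ^ s ≤ 1 :=
                Real.rpow_le_one (by positivity) hbase hs0
              simpa [hg] using ENNReal.ofReal_le_one.2 this
          _ ≤ volume (ball c ρ) := by
              rw [setLIntegral_one]
              exact measure_mono diff_subset
      · -- near part
        calc ∫⁻ z in ({y} : Set _) ∪ ⋃ k, A k, g z
            ≤ (∫⁻ z in ({y} : Set _), g z) + ∫⁻ z in ⋃ k, A k, g z :=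
              lintegral_union_le _ _ _
          _ ≤ 0 + ∑' k, ∫⁻ z in A k, g z := by
              gcongr
              · have h0 : volume ({y} : Set (EuclideanSpace ℝ (Fin n))) = 0 := by
                  have he : ({y} : Set (EuclideanSpace ℝ (Fin n))) = closedBall y 0 := by
                    simp
                  rw [he, Measure.addHaar_closedBall volume y le_rfl, finrank_euclideanSpace_fin]
                  have : (0:ℝ) ^ n = 0 := by
                    exact zero_pow (by omega)
                  simp [this]
                simp [Measure.restrict_eq_zero.2 h0]
              · exact lintegral_iUnion_le _ _
          _ = ∑' k, ∫⁻ z in A k, g z := by rw [zero_add]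
          _ ≤ ∑' k, ENNReal.ofReal ((2:ℝ) ^ s * R ^ n) *
                (ENNReal.ofReal ((2:ℝ) ^ (s - (n:ℝ)))) ^ k *
                volume (ball (0 : EuclideanSpace ℝ (Fin n)) 1) := by
              apply ENNReal.tsum_le_tsum
              intro k
              have hrk : (0:ℝ) < R * (2:ℝ)⁻¹ ^ k := by positivity
              have hbound : ∀ z ∈ A k, g z ≤ ENNReal.ofReal (((2:ℝ) ^ (k+1)) ^ s) := by
                intro z hz
                have h1 : R * (2:ℝ)⁻¹ ^ (k+1) ≤ dist z y :=
                  not_lt.1 fun h => hz.2 (mem_ball.2 h)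
                have h2 : (0:ℝ) < dist z y := lt_of_lt_of_le (by positivity) h1
                have hbase : R / ‖z - y‖ ≤ (2:ℝ) ^ (k+1) := by
                  rw [← dist_eq_norm, div_le_iff₀ h2]
                  calc R = (2:ℝ)^(k+1) * (R * (2:ℝ)⁻¹ ^ (k+1)) := by
                        rw [mul_comm R, ← mul_assoc, ← mul_pow]
                        norm_num
                    _ ≤ (2:ℝ)^(k+1) * dist z y := by
                        apply mul_le_mul_of_nonneg_left h1 (by positivity)
                have : (R / ‖z - y‖) ^ s ≤ ((2:ℝ) ^ (k+1)) ^ s :=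
                  Real.rpow_le_rpow (by positivity) hbase hs0
                exact ENNReal.ofReal_le_ofReal this
              calc ∫⁻ z in A k, g z
                  ≤ ∫⁻ _ in A k, ENNReal.ofReal (((2:ℝ) ^ (k+1)) ^ s) :=
                    setLIntegral_mono' (measurableSet_ball.diff measurableSet_ball) hbound
                _ = ENNReal.ofReal (((2:ℝ) ^ (k+1)) ^ s) * volume (A k) := by
                    rw [setLIntegral_const]
                _ ≤ ENNReal.ofReal (((2:ℝ) ^ (k+1)) ^ s) *
                      volume (ball y (R * (2:ℝ)⁻¹ ^ k)) := by
                    gcongr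
                    exact diff_subset
                _ = ENNReal.ofReal (((2:ℝ) ^ (k+1)) ^ s) *
                      (ENNReal.ofReal ((R * (2:ℝ)⁻¹ ^ k) ^ n) *
                        volume (ball (0 : EuclideanSpace ℝ (Fin n)) 1)) := by
                    rw [Measure.addHaar_ball_of_pos volume y hrk, finrank_euclideanSpace_fin]
                _ = ENNReal.ofReal ((2:ℝ) ^ s * R ^ n) *
                      (ENNReal.ofReal ((2:ℝ) ^ (s - (n:ℝ)))) ^ k *
                      volume (ball (0 : EuclideanSpace ℝ (Fin n)) 1) := by
                    rw [← mul_assoc, ← ENNReal.ofReal_pow hq0, ← ENNReal.ofReal_mul (by positivity),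
                      ← ENNReal.ofReal_mul (by positivity)]
                    congr 2
                    have e1 : ((2:ℝ) ^ (k+1)) ^ s = (2:ℝ) ^ (((k:ℝ)+1) * s) := by
                      rw [← Real.rpow_natCast (2:ℝ) (k+1), ← Real.rpow_mul (by norm_num)]
                      push_cast
                      ring_nf
                    have e2 : ((2:ℝ) ^ (s - (n:ℝ))) ^ k = (2:ℝ) ^ ((s - (n:ℝ)) * k) := by
                      rw [← Real.rpow_natCast ((2:ℝ) ^ (s - (n:ℝ))) k, ← Real.rpow_mul (by norm_num)]
                    have e3 : ((2:ℝ)⁻¹ ^ k : ℝ) ^ n = (2:ℝ) ^ (-((n:ℝ) * k)) := by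
                      rw [← Real.rpow_natCast ((2:ℝ)⁻¹) k, ← Real.rpow_natCast _ n,
                        ← Real.rpow_mul (by norm_num), ← Real.rpow_neg_one (2:ℝ),
                        ← Real.rpow_mul (by norm_num)]
                      ring_nf
                    rw [e1, e2, mul_pow, e3]
                    have h4 : ((k:ℝ) + 1) * s + -((n:ℝ) * k) = s + (s - (n:ℝ)) * k := by ring
                    calc (2:ℝ) ^ (((k:ℝ) + 1) * s) * (R ^ n * (2:ℝ) ^ (-((n:ℝ) * (k:ℝ))))
                        = R ^ n * (2:ℝ) ^ (((k:ℝ) + 1) * s + -((n:ℝ) * (k:ℝ))) := by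
                          rw [Real.rpow_add (by norm_num : (0:ℝ) < 2)]; ring
                      _ = (2:ℝ) ^ s * R ^ n * (2:ℝ) ^ ((s - (n:ℝ)) * (k:ℝ)) := by
                          rw [h4, Real.rpow_add (by norm_num : (0:ℝ) < 2)]; ring
          _ = ENNReal.ofReal ((2:ℝ) ^ s * R ^ n) *
                (1 - ENNReal.ofReal ((2:ℝ) ^ (s - (n:ℝ))))⁻¹ *
                volume (ball (0 : EuclideanSpace ℝ (Fin n)) 1) := by
              rw [ENNReal.tsum_mul_right, ENNReal.tsum_mul_left, ENNReal.tsum_geometric]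
          _ = ENNReal.ofReal ((2:ℝ) ^ s / (1 - (2:ℝ) ^ (s - (n:ℝ))) * R ^ n) *
                volume (ball (0 : EuclideanSpace ℝ (Fin n)) 1) := by
              congr 1
              have h1 : (1:ℝ≥0∞) - ENNReal.ofReal ((2:ℝ) ^ (s - (n:ℝ))) =
                  ENNReal.ofReal (1 - (2:ℝ) ^ (s - (n:ℝ))) := by
                rw [ENNReal.ofReal_sub _ hq0, ENNReal.ofReal_one]
              rw [h1, ← ENNReal.ofReal_inv_of_pos (by linarith), ← ENNReal.ofReal_mul (by positivity)]
              congr 1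
              field_simp

lemma measurable_kernel {n : ℕ} {s R : ℝ} (hs0 : 0 ≤ s) (y : EuclideanSpace ℝ (Fin n)) :
    Measurable (fun z : EuclideanSpace ℝ (Fin n) => (R / ‖z - y‖) ^ s) := by
  have h1 : Measurable (fun z : EuclideanSpace ℝ (Fin n) => R / ‖z - y‖) :=
    measurable_const.div ((continuous_id.sub continuous_const).norm.measurable)
  exact (Real.continuous_rpow_const hs0).measurable.comp h1

lemma integrableOn_kernel {n : ℕ} (hn : 1 ≤ n) {s : ℝ} (hs0 : 0 ≤ s) (hsn : s < n)
    {R : ℝ} (hR : 0 < R) (y c : EuclideanSpace ℝ (Fin n)) (ρ : ℝ) :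
    IntegrableOn (fun z => (R / ‖z - y‖) ^ s) (ball c ρ) := by
  constructor
  · exact (measurable_kernel hs0 y).aestronglyMeasurable
  · rw [hasFiniteIntegral_iff_ofReal
      (ae_of_all _ fun z => Real.rpow_nonneg (div_nonneg hR.le (norm_nonneg _)) _)]
    refine lt_of_le_of_lt (kernel_lintegral_le n hn hs0 hsn hR y c ρ) ?_
    exact ENNReal.add_lt_top.2
      ⟨measure_ball_lt_top, ENNReal.mul_lt_top ENNReal.ofReal_lt_top measure_ball_lt_top⟩

lemma kernel_lintegral_ball_le {n : ℕ} (hn : 1 ≤ n) {s : ℝ} (hs0 : 0 ≤ s) (hsn : s < n)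
    {r : ℝ} (hr : 0 < r) (y x₀ : EuclideanSpace ℝ (Fin n)) :
    ∫⁻ x in ball x₀ r, ENNReal.ofReal ((3 * r / ‖x - y‖) ^ s) ≤
      ENNReal.ofReal (1 + Cker n s) * volume (ball x₀ r) := by
  refine le_trans (kernel_lintegral_le n hn hs0 hsn (by linarith) y x₀ r) ?_
  have hC : (0:ℝ) ≤ (2:ℝ) ^ s / (1 - (2:ℝ) ^ (s - (n:ℝ))) := by
    have h1 := two_rpow_sub_lt_one (n := n) hsn
    have h2 : (0:ℝ) ≤ (2:ℝ) ^ s := Real.rpow_nonneg (by norm_num) _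
    exact div_nonneg h2 (by linarith)
  have hball : volume (ball x₀ r) =
      ENNReal.ofReal (r ^ n) * volume (ball (0 : EuclideanSpace ℝ (Fin n)) 1) := by
    rw [Measure.addHaar_ball_of_pos volume x₀ hr, finrank_euclideanSpace_fin]
  calc volume (ball x₀ r) +
        ENNReal.ofReal ((2:ℝ) ^ s / (1 - (2:ℝ) ^ (s - (n:ℝ))) * (3*r) ^ n) *
          volume (ball (0 : EuclideanSpace ℝ (Fin n)) 1)
      = volume (ball x₀ r) + ENNReal.ofReal (Cker n s) * (ENNReal.ofReal (r ^ n) *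
          volume (ball (0 : EuclideanSpace ℝ (Fin n)) 1)) := by
        rw [← mul_assoc, ← ENNReal.ofReal_mul (Cker_nonneg hsn)]
        congr 3
        rw [Cker]
        ring
    _ = (1 + ENNReal.ofReal (Cker n s)) * volume (ball x₀ r) := by
        rw [← hball]; ring
    _ ≤ ENNReal.ofReal (1 + Cker n s) * volume (ball x₀ r) := by
        gcongr
        rw [ENNReal.ofReal_add (by norm_num) (Cker_nonneg hsn), ENNReal.ofReal_one]

lemma abs_log_le {t : ℝ} (ht : 0 < t) :
    |Real.log t| ≤ 2 * ((1:ℝ) / t) ^ ((1:ℝ)/2) + t := by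
  have h1 : (0:ℝ) < 1 / t := by positivity
  have hk : (0:ℝ) ≤ ((1:ℝ)/t) ^ ((1:ℝ)/2) := Real.rpow_nonneg h1.le _
  rw [abs_le]
  constructor
  · have h2 : Real.log (((1:ℝ)/t) ^ ((1:ℝ)/2)) ≤ ((1:ℝ)/t) ^ ((1:ℝ)/2) - 1 :=
      Real.log_le_sub_one_of_pos (Real.rpow_pos_of_pos h1 _)
    rw [Real.log_rpow h1, Real.log_div one_ne_zero ht.ne', Real.log_one] at h2
    nlinarith
  · have h2 : Real.log t ≤ t - 1 := Real.log_le_sub_one_of_pos ht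
    nlinarith

lemma integrableOn_logKernel_mul {n : ℕ} (hn : 1 ≤ n)
    {f : EuclideanSpace ℝ (Fin n) → ℝ} (hf : Continuous f) {R : ℝ} (hR : 0 < R)
    (x c : EuclideanSpace ℝ (Fin n)) (ρ : ℝ) :
    IntegrableOn (fun y => Real.log (R / ‖x - y‖) * f y) (ball c ρ) := by
  obtain ⟨M, hM⟩ := (isCompact_closedBall c |ρ|).exists_bound_of_continuousOn
    hf.continuousOn
  have hM0 : 0 ≤ M := le_trans (norm_nonneg _) (hM c (mem_closedBall_self (abs_nonneg _)))
  set G : EuclideanSpace ℝ (Fin n) → ℝ :=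
    fun y => (|Real.log R| + 2 * ((1:ℝ) / ‖x - y‖) ^ ((1:ℝ)/2) + (‖x - c‖ + |ρ|)) * M with hG
  have hGint : IntegrableOn G (ball c ρ) := by
    apply Integrable.mul_const
    apply Integrable.add
    · apply Integrable.add (integrableOn_const measure_ball_lt_top.ne)
      have hhalf : (0:ℝ) ≤ (1:ℝ)/2 := by norm_num
      have hlt : (1:ℝ)/2 < (n:ℝ) := by
        have : (1:ℝ) ≤ (n:ℝ) := by exact_mod_cast hn
        linarith
      have hker := (integrableOn_kernel hn hhalf hlt one_pos x c ρ).const_mul 2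
      have heq : (fun z : EuclideanSpace ℝ (Fin n) => 2 * ((1:ℝ)/‖x - z‖) ^ ((1:ℝ)/2)) =
          fun z => 2 * ((1:ℝ)/‖z - x‖) ^ ((1:ℝ)/2) := by
        funext z; rw [norm_sub_rev]
      rw [heq]
      exact hker
    · exact integrableOn_const measure_ball_lt_top.ne
  apply Integrable.mono' hGint
  · apply AEStronglyMeasurable.mul
    · exact (Real.measurable_log.comp
        (measurable_const.div ((continuous_const.sub continuous_id).norm.measurable))).aestronglyMeasurable
    · exact hf.measurable.aestronglyMeasurable
  · rw [ae_restrict_iff' measurableSet_ball]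
    apply ae_of_all
    intro y hy
    have hfy : |f y| ≤ M := hM y (closedBall_subset_closedBall (le_abs_self ρ) (ball_subset_closedBall hy))
    have hyc : ‖x - y‖ ≤ ‖x - c‖ + |ρ| := by
      have : ‖y - c‖ < ρ := by
        rw [← dist_eq_norm]; exact mem_ball.1 hy
      have h5 : ‖c - y‖ ≤ |ρ| := by
        rw [norm_sub_rev]
        have := le_abs_self ρ
        linarith
      calc ‖x - y‖ = ‖(x - c) + (c - y)‖ := by rw [sub_add_sub_cancel]
        _ ≤ ‖x - c‖ + ‖c - y‖ := norm_add_le _ _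
        _ ≤ ‖x - c‖ + |ρ| := by linarith
    have hkey : |Real.log (R / ‖x - y‖)| ≤
        |Real.log R| + 2 * ((1:ℝ) / ‖x - y‖) ^ ((1:ℝ)/2) + (‖x - c‖ + |ρ|) := by
      rcases eq_or_lt_of_le (norm_nonneg (x - y)) with h0 | h0
      · rw [← h0]
        simp only [div_zero, Real.log_zero, abs_zero]
        have : (0:ℝ) ≤ (0:ℝ) ^ ((1:ℝ)/2) := Real.rpow_nonneg le_rfl _
        have h2 : (0:ℝ) ≤ ‖x - c‖ + |ρ| := by positivity
        have h3 : (0:ℝ) ≤ |Real.log R| := abs_nonneg _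
        linarith
      · have hlog : |Real.log (R / ‖x - y‖)| ≤ |Real.log R| + |Real.log ‖x - y‖| := by
          rw [Real.log_div hR.ne' h0.ne']
          exact abs_sub _ _
        have habs := abs_log_le h0
        have : |Real.log ‖x - y‖| ≤ 2 * ((1:ℝ) / ‖x - y‖) ^ ((1:ℝ)/2) + (‖x - c‖ + |ρ|) := by
          refine le_trans habs ?_
          have h2 : (0:ℝ) ≤ |ρ| := abs_nonneg _
          linarith
        linarith
    calc ‖Real.log (R / ‖x - y‖) * f y‖ = |Real.log (R / ‖x - y‖)| * |f y| := abs_mul _ _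
      _ ≤ (|Real.log R| + 2 * ((1:ℝ) / ‖x - y‖) ^ ((1:ℝ)/2) + (‖x - c‖ + |ρ|)) * M := by
          apply mul_le_mul hkey hfy (abs_nonneg _)
          have : (0:ℝ) ≤ (0:ℝ) ^ ((1:ℝ)/2) := Real.rpow_nonneg le_rfl _
          positivity

noncomputable def coreK (n : ℕ) (A M : ℝ) : ℝ :=
  Real.exp ((n / cN n) * Real.log 2 * M) * (2 + Cker n ((n : ℝ) * A / cN n))

lemma vol_singleton {n : ℕ} (hn : 1 ≤ n) (y : EuclideanSpace ℝ (Fin n)) :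
    volume ({y} : Set (EuclideanSpace ℝ (Fin n))) = 0 := by
  have he : ({y} : Set (EuclideanSpace ℝ (Fin n))) = closedBall y 0 := by simp
  rw [he, Measure.addHaar_closedBall volume y le_rfl, finrank_euclideanSpace_fin]
  have : (0:ℝ) ^ n = 0 := zero_pow (by omega)
  simp [this]

lemma exp_integral_le {α : Type*} [MeasurableSpace α] {μ : Measure α} [IsProbabilityMeasure μ]
    {h : α → ℝ} (h1 : Integrable h μ) (h2 : Integrable (fun y => Real.exp (h y)) μ) :
    Real.exp (∫ y, h y ∂μ) ≤ ∫ y, Real.exp (h y) ∂μ :=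
  convexOn_exp.map_integral_le Real.continuous_exp.continuousOn isClosed_univ
    (Filter.Eventually.of_forall fun _ => Set.mem_univ _) h1 h2

lemma max_sub_max_neg (t : ℝ) : max t 0 - max (-t) 0 = t := by
  rcases le_total t 0 with h | h
  · rw [max_eq_right h, max_eq_left (by linarith)]; ring
  · rw [max_eq_left h, max_eq_right (by linarith)]; ring

set_option maxHeartbeats 2000000 in
lemma core (n : ℕ) (hn : 1 ≤ n) (f : EuclideanSpace ℝ (Fin n) → ℝ)
    (hfc : Continuous f) (hfi : Integrable f)
    (hlog : ∀ x : EuclideanSpace ℝ (Fin n),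
      Integrable (fun y => Real.log (‖y‖ / ‖x - y‖) * f y))
    (A M : ℝ) (hA : (∫ y, max (f y) 0) ≤ A) (hAc : A < cN n)
    (hM : (∫ y, |f y|) ≤ M)
    (x₀ : EuclideanSpace ℝ (Fin n)) (r : ℝ) (hr : 0 < r) :
    ∫ x in ball x₀ r, Real.exp ((n : ℝ) * logPot n f x) ≤
      coreK n A M * (volume (ball x₀ r)).toReal *
        Real.exp ((n : ℝ) * logPot n f x₀ -
          ((n : ℝ) / cN n) * ∫ y in ball x₀ (2*r), Real.log (3*r / ‖x₀ - y‖) * f y) := by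
  have hc : (0:ℝ) < cN n := cN_pos hn
  have hn1 : (1:ℝ) ≤ (n:ℝ) := by exact_mod_cast hn
  have hR3 : (0:ℝ) < 3 * r := by linarith
  set c := cN n with hcdef
  set R := 3 * r with hRdef
  set TB := ball x₀ (2*r) with hTBdef
  set B := ball x₀ r with hBdef
  set fp : EuclideanSpace ℝ (Fin n) → ℝ := fun y => max (f y) 0 with hfp
  set fm : EuclideanSpace ℝ (Fin n) → ℝ := fun y => max (-(f y)) 0 with hfm
  have hfp_cont : Continuous fp := hfc.max continuous_const
  have hfm_cont : Continuous fm := hfc.neg.max continuous_const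
  have hfp_int : Integrable fp := by
    have := hfi.pos_part
    simpa [hfp, max_def] using this
  have hfp_nn : ∀ y, 0 ≤ fp y := fun y => le_max_right _ _
  have hfm_nn : ∀ y, 0 ≤ fm y := fun y => le_max_right _ _
  set m := ∫ y in TB, fp y with hm
  have hm0 : 0 ≤ m := setIntegral_nonneg measurableSet_ball fun y _ => hfp_nn y
  have hmA : m ≤ A := le_trans
    (setIntegral_le_integral hfp_int (Filter.Eventually.of_forall hfp_nn)) hA
  have hA0 : 0 ≤ A := le_trans (le_trans hm0 hmA) le_rfl
  set sA := (n:ℝ) * A / c with hsA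
  have hsA0 : 0 ≤ sA := by positivity
  have hsAn : sA < n := by
    rw [hsA, div_lt_iff₀ hc]
    calc (n:ℝ) * A < (n:ℝ) * c := by
          apply mul_lt_mul_of_pos_left hAc (by linarith)
      _ = (n:ℝ) * c := rfl
  -- quantities
  set IW : EuclideanSpace ℝ (Fin n) → ℝ :=
    fun x => ∫ y in TB, Real.log (R / ‖x - y‖) * f y with hIW
  set IA : EuclideanSpace ℝ (Fin n) → ℝ :=
    fun x => ∫ y in TB, Real.log (R / ‖x - y‖) * fp y with hIA
  set IFar : EuclideanSpace ℝ (Fin n) → ℝ :=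
    fun x => ∫ y in TBᶜ, Real.log (‖x₀ - y‖ / ‖x - y‖) * f y with hIFar
  -- integrability of log-kernel pieces
  have hIW_int : ∀ x : EuclideanSpace ℝ (Fin n),
      IntegrableOn (fun y => Real.log (R / ‖x - y‖) * f y) TB :=
    fun x => integrableOn_logKernel_mul hn hfc hR3 x x₀ (2*r)
  have hIA_int : ∀ x : EuclideanSpace ℝ (Fin n),
      IntegrableOn (fun y => Real.log (R / ‖x - y‖) * fp y) TB :=
    fun x => integrableOn_logKernel_mul hn hfp_cont hR3 x x₀ (2*r)
  have hIm_int : ∀ x : EuclideanSpace ℝ (Fin n),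
      IntegrableOn (fun y => Real.log (R / ‖x - y‖) * fm y) TB :=
    fun x => integrableOn_logKernel_mul hn hfm_cont hR3 x x₀ (2*r)
  -- difference of potentials
  have hdiff : ∀ x : EuclideanSpace ℝ (Fin n),
      Integrable (fun y => Real.log (‖x₀ - y‖ / ‖x - y‖) * f y) ∧
      ∫ y, Real.log (‖x₀ - y‖ / ‖x - y‖) * f y =
        (∫ y, Real.log (‖y‖ / ‖x - y‖) * f y) - ∫ y, Real.log (‖y‖ / ‖x₀ - y‖) * f y := by
    intro x
    have hnull : volume ({(0 : EuclideanSpace ℝ (Fin n))} ∪ {x} ∪ {x₀}) = 0 := by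
      refine le_antisymm (le_trans (measure_union_le _ _) ?_) zero_le
      rw [vol_singleton hn]
      refine le_trans (add_le_add (measure_union_le _ _) le_rfl) ?_
      rw [vol_singleton hn, vol_singleton hn]
      simp
    have hae : ∀ᵐ y : EuclideanSpace ℝ (Fin n),
        y ∉ ({(0 : EuclideanSpace ℝ (Fin n))} ∪ {x} ∪ {x₀} : Set _) :=
      measure_eq_zero_iff_ae_notMem.1 hnull
    have haeq : (fun y => Real.log (‖y‖ / ‖x - y‖) * f y - Real.log (‖y‖ / ‖x₀ - y‖) * f y)
        =ᵐ[volume] fun y => Real.log (‖x₀ - y‖ / ‖x - y‖) * f y := by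
      filter_upwards [hae] with y hy
      simp only [Set.mem_union, Set.mem_singleton_iff, not_or] at hy
      obtain ⟨⟨hy0, hyx⟩, hyx0⟩ := hy
      have h1 : ‖y‖ ≠ 0 := by simpa using hy0
      have h2 : ‖x - y‖ ≠ 0 := by
        simp only [norm_ne_zero_iff, sub_ne_zero]
        exact fun h => hyx h.symm
      have h3 : ‖x₀ - y‖ ≠ 0 := by
        simp only [norm_ne_zero_iff, sub_ne_zero]
        exact fun h => hyx0 h.symm
      rw [Real.log_div h1 h2, Real.log_div h1 h3, Real.log_div h3 h2]
      ring
    have hint : Integrable (fun y => Real.log (‖x₀ - y‖ / ‖x - y‖) * f y) :=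
      ((hlog x).sub (hlog x₀)).congr haeq
    refine ⟨hint, ?_⟩
    rw [← integral_congr_ae haeq, integral_sub (hlog x) (hlog x₀)]
  -- decomposition
  have hKey0 : ∀ x : EuclideanSpace ℝ (Fin n),
      (n : ℝ) * logPot n f x =
        (n : ℝ) * logPot n f x₀ + ((n:ℝ)/c) * (IW x - IW x₀) + ((n:ℝ)/c) * IFar x := by
    intro x
    have hsplit : ∫ y, Real.log (‖x₀ - y‖ / ‖x - y‖) * f y =
        (∫ y in TB, Real.log (‖x₀ - y‖ / ‖x - y‖) * f y) + IFar x := by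
      rw [hIFar]
      exact (integral_add_compl measurableSet_ball (hdiff x).1).symm
    have hTBpart : ∫ y in TB, Real.log (‖x₀ - y‖ / ‖x - y‖) * f y = IW x - IW x₀ := by
      have haeq2 : (fun y => Real.log (R / ‖x - y‖) * f y - Real.log (R / ‖x₀ - y‖) * f y)
          =ᵐ[volume.restrict TB] fun y => Real.log (‖x₀ - y‖ / ‖x - y‖) * f y := by
        apply ae_restrict_of_ae
        have hnull : volume ({x} ∪ {x₀} : Set (EuclideanSpace ℝ (Fin n))) = 0 := by
          refine le_antisymm (le_trans (measure_union_le _ _) ?_) zero_le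
          rw [vol_singleton hn, vol_singleton hn]; simp
        filter_upwards [measure_eq_zero_iff_ae_notMem.1 hnull] with y hy
        simp only [Set.mem_union, Set.mem_singleton_iff, not_or] at hy
        obtain ⟨hyx, hyx0⟩ := hy
        have h2 : ‖x - y‖ ≠ 0 := by
          simp only [norm_ne_zero_iff, sub_ne_zero]
          exact fun h => hyx h.symm
        have h3 : ‖x₀ - y‖ ≠ 0 := by
          simp only [norm_ne_zero_iff, sub_ne_zero]
          exact fun h => hyx0 h.symm
        rw [Real.log_div (ne_of_gt hR3) h2, Real.log_div (ne_of_gt hR3) h3,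
          Real.log_div h3 h2]
        ring
      rw [← integral_congr_ae haeq2, integral_sub (hIW_int x) (hIW_int x₀)]
    have := (hdiff x).2
    rw [hsplit, hTBpart] at this
    simp only [logPot]
    rw [← hcdef]
    have hcne : c ≠ 0 := ne_of_gt hc
    linear_combination (-((n:ℝ)/c)) * this
  -- far field bound
  have hFar : ∀ x ∈ B, ((n:ℝ)/c) * IFar x ≤ ((n:ℝ)/c) * Real.log 2 * M := by
    intro x hx
    have hlog2 : (0:ℝ) ≤ Real.log 2 := Real.log_nonneg one_le_two
    have hMnn : 0 ≤ M := le_trans (integral_nonneg fun y => abs_nonneg _) hM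
    have h1 : |IFar x| ≤ Real.log 2 * M := by
      have habs : |IFar x| ≤ ∫ y in TBᶜ, |Real.log (‖x₀ - y‖ / ‖x - y‖)| * |f y| := by
        rw [hIFar]
        simpa [Real.norm_eq_abs, abs_mul] using
          norm_integral_le_integral_norm (μ := volume.restrict TBᶜ)
            (f := fun y => Real.log (‖x₀ - y‖ / ‖x - y‖) * f y)
      have hbd : ∫ y in TBᶜ, |Real.log (‖x₀ - y‖ / ‖x - y‖)| * |f y| ≤
          ∫ y in TBᶜ, Real.log 2 * |f y| := by
        apply integral_mono_of_nonneg
          (Filter.Eventually.of_forall fun y => mul_nonneg (abs_nonneg _) (abs_nonneg _))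
          ((hfi.abs.const_mul _).integrableOn)
        refine ((ae_restrict_iff' measurableSet_ball.compl).2 ?_)
        apply Filter.Eventually.of_forall
        intro y hy
        have ha : 2 * r ≤ ‖x₀ - y‖ := by
          have := mem_ball.not.1 (fun h => hy h)
          push_neg at this
          rwa [dist_comm, dist_eq_norm] at this
        have hxx₀ : ‖x₀ - x‖ < r := by
          have := mem_ball.1 hx
          rwa [dist_comm, dist_eq_norm] at this
        have hblow : ‖x₀ - y‖ - r ≤ ‖x - y‖ := by
          have h2 : ‖x₀ - y‖ - ‖x₀ - x‖ ≤ ‖(x₀ - y) - (x₀ - x)‖ := norm_sub_norm_le _ _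
          have h3 : (x₀ - y) - (x₀ - x) = x - y := by abel
          rw [h3] at h2
          linarith
        have hbhigh : ‖x - y‖ ≤ ‖x₀ - y‖ + r := by
          have h2 : ‖x - y‖ ≤ ‖x - x₀‖ + ‖x₀ - y‖ := by
            calc ‖x - y‖ = ‖(x - x₀) + (x₀ - y)‖ := by rw [sub_add_sub_cancel]
              _ ≤ ‖x - x₀‖ + ‖x₀ - y‖ := norm_add_le _ _
          have h3 : ‖x - x₀‖ < r := by rwa [norm_sub_rev] at hxx₀
          linarith
        have hb0 : 0 < ‖x - y‖ := by linarith
        have ha0 : 0 < ‖x₀ - y‖ := by linarith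
        set t := ‖x₀ - y‖ / ‖x - y‖ with ht
        have ht0 : 0 < t := by positivity
        have ht2 : t ≤ 2 := by
          rw [ht, div_le_iff₀ hb0]
          linarith
        have ht12 : 1/2 ≤ t := by
          rw [ht, le_div_iff₀ hb0]
          linarith
        have habs2 : |Real.log t| ≤ Real.log 2 := by
          rw [abs_le]
          constructor
          · have h4 : Real.log (1/2) ≤ Real.log t := Real.log_le_log (by norm_num) ht12
            rw [one_div, Real.log_inv] at h4
            linarith
          · exact Real.log_le_log ht0 ht2
        exact mul_le_mul_of_nonneg_right habs2 (abs_nonneg _)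
      have hfin : ∫ y in TBᶜ, Real.log 2 * |f y| ≤ Real.log 2 * M := by
        rw [integral_const_mul]
        apply mul_le_mul_of_nonneg_left _ hlog2
        exact le_trans (setIntegral_le_integral hfi.abs
          (Filter.Eventually.of_forall fun y => abs_nonneg _)) hM
      linarith
    have hnc : (0:ℝ) ≤ (n:ℝ)/c := by positivity
    calc ((n:ℝ)/c) * IFar x ≤ ((n:ℝ)/c) * |IFar x| :=
          mul_le_mul_of_nonneg_left (le_abs_self _) hnc
      _ ≤ ((n:ℝ)/c) * (Real.log 2 * M) := mul_le_mul_of_nonneg_left h1 hnc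
      _ = ((n:ℝ)/c) * Real.log 2 * M := by ring
  -- W ≤ A part
  have hWA : ∀ x ∈ B, IW x ≤ IA x := by
    intro x hx
    have haeq : ∀ᵐ y ∂(volume.restrict TB),
        Real.log (R / ‖x - y‖) * f y =
          Real.log (R / ‖x - y‖) * fp y - Real.log (R / ‖x - y‖) * fm y := by
      apply Filter.Eventually.of_forall
      intro y
      have h : fp y - fm y = f y := max_sub_max_neg (f y)
      rw [← h]
      ring
    have hker_nn : ∀ y ∈ TB, 0 ≤ Real.log (R / ‖x - y‖) := by
      intro y hy
      rcases eq_or_lt_of_le (norm_nonneg (x - y)) with h0 | h0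
      · rw [← h0]
        simp
      · apply Real.log_nonneg
        rw [le_div_iff₀ h0]
        have h1 : dist x y < 3 * r := by
          calc dist x y ≤ dist x x₀ + dist x₀ y := dist_triangle _ _ _
            _ < r + 2*r := add_lt_add (mem_ball.1 hx) (by
                have := mem_ball.1 hy
                rwa [dist_comm] at this)
            _ = 3*r := by ring
        rw [dist_eq_norm] at h1
        rw [hRdef]
        linarith
    have hfm_part : 0 ≤ ∫ y in TB, Real.log (R / ‖x - y‖) * fm y :=
      setIntegral_nonneg measurableSet_ball fun y hy =>
        mul_nonneg (hker_nn y hy) (hfm_nn y)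
    have : IW x = IA x - ∫ y in TB, Real.log (R / ‖x - y‖) * fm y := by
      rw [hIW, hIA, ← integral_sub (hIA_int x) (hIm_int x)]
      exact integral_congr_ae haeq
    linarith
  -- pointwise exponent bound
  have hexp_le : ∀ (s' : ℝ), 0 ≤ s' → s' ≤ sA → ∀ x y : EuclideanSpace ℝ (Fin n),
      Real.exp (s' * Real.log (R / ‖x - y‖)) ≤ 1 + (R / ‖x - y‖) ^ sA := by
    intro s' hs'0 hs'A x y
    set t := R / ‖x - y‖ with ht
    have ht0 : 0 ≤ t := div_nonneg hR3.le (norm_nonneg _)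
    have htnn : 0 ≤ t ^ sA := Real.rpow_nonneg ht0 _
    rcases eq_or_lt_of_le ht0 with h0 | h0
    · rw [← h0, Real.log_zero, mul_zero, Real.exp_zero]
      have h2 : (0:ℝ) ≤ (0:ℝ) ^ sA := Real.rpow_nonneg le_rfl _
      linarith
    · rw [show s' * Real.log t = Real.log t * s' by ring, ← Real.rpow_def_of_pos h0]
      rcases le_total t 1 with h1 | h1
      · have := Real.rpow_le_one ht0 h1 hs'0
        linarith
      · have h2 : t ^ s' ≤ t ^ sA := Real.rpow_le_rpow_of_exponent_le h1 hs'A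
        linarith
  -- bound for fp on TB
  obtain ⟨Mf, hMf⟩ := (isCompact_closedBall x₀ (2*r)).exists_bound_of_continuousOn
    hfp_cont.continuousOn
  have hMf_nn : 0 ≤ Mf :=
    le_trans (norm_nonneg _) (hMf x₀ (mem_closedBall_self (by linarith)))
  have hfp_le : ∀ y ∈ TB, fp y ≤ Mf := by
    intro y hy
    have := hMf y (ball_subset_closedBall hy)
    rw [Real.norm_eq_abs] at this
    exact le_trans (le_abs_self _) this
  -- Φ and its properties
  set Φ : EuclideanSpace ℝ (Fin n) → ℝ :=
    fun x => ∫ y in TB, (R / ‖x - y‖) ^ sA * fp y with hΦ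
  have hΦnn : ∀ x, 0 ≤ Φ x := fun x =>
    setIntegral_nonneg measurableSet_ball fun y _ =>
      mul_nonneg (Real.rpow_nonneg (div_nonneg hR3.le (norm_nonneg _)) _) (hfp_nn y)
  have hkermeas : ∀ x : EuclideanSpace ℝ (Fin n),
      Measurable (fun y : EuclideanSpace ℝ (Fin n) => (R / ‖x - y‖) ^ sA) := fun x =>
    (Real.continuous_rpow_const hsA0).measurable.comp
      (measurable_const.div ((continuous_const.sub continuous_id).norm.measurable))
  have hΦx_int : ∀ x : EuclideanSpace ℝ (Fin n),
      IntegrableOn (fun y => (R / ‖x - y‖) ^ sA * fp y) TB := by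
    intro x
    have hkint : IntegrableOn (fun y => (R / ‖x - y‖) ^ sA * Mf) TB := by
      have h1 := (integrableOn_kernel hn hsA0 hsAn hR3 x x₀ (2*r)).mul_const Mf
      have heq : (fun z : EuclideanSpace ℝ (Fin n) => (R / ‖z - x‖) ^ sA * Mf) =
          fun z => (R / ‖x - z‖) ^ sA * Mf := by
        funext z; rw [norm_sub_rev]
      rwa [heq] at h1
    apply Integrable.mono' hkint
    · exact ((hkermeas x).mul hfp_cont.measurable).aestronglyMeasurable
    · refine ((ae_restrict_iff' measurableSet_ball).2 ?_)
      apply Filter.Eventually.of_forall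
      intro y hy
      have h1 : 0 ≤ (R / ‖x - y‖) ^ sA :=
        Real.rpow_nonneg (div_nonneg hR3.le (norm_nonneg _)) _
      rw [Real.norm_eq_abs, abs_mul, abs_of_nonneg h1, abs_of_nonneg (hfp_nn y)]
      exact mul_le_mul_of_nonneg_left (hfp_le y hy) h1
  have hFmeas : Measurable (fun p : EuclideanSpace ℝ (Fin n) × EuclideanSpace ℝ (Fin n) =>
      (R / ‖p.1 - p.2‖) ^ sA * fp p.2) := by
    apply Measurable.mul
    · exact (Real.continuous_rpow_const hsA0).measurable.comp
        (measurable_const.div ((continuous_fst.sub continuous_snd).norm.measurable))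
    · exact hfp_cont.measurable.comp measurable_snd
  have hΦmeas : StronglyMeasurable Φ := by
    have := hFmeas.stronglyMeasurable.integral_prod_right' (ν := volume.restrict TB)
    exact this
  have hofRealΦ : ∀ x, ENNReal.ofReal (Φ x) =
      ∫⁻ y in TB, ENNReal.ofReal ((R / ‖x - y‖) ^ sA * fp y) := fun x =>
    ofReal_integral_eq_lintegral_ofReal (hΦx_int x)
      (Filter.Eventually.of_forall fun y =>
        mul_nonneg (Real.rpow_nonneg (div_nonneg hR3.le (norm_nonneg _)) _) (hfp_nn y))
  have hCk_nn : 0 ≤ Cker n sA := Cker_nonneg hsAn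
  have hI_le : ∫⁻ x in B, ENNReal.ofReal (Φ x) ≤
      ENNReal.ofReal m * (ENNReal.ofReal (1 + Cker n sA) * volume B) := by
    calc ∫⁻ x in B, ENNReal.ofReal (Φ x)
        = ∫⁻ x in B, ∫⁻ y in TB, ENNReal.ofReal ((R / ‖x - y‖) ^ sA * fp y) :=
          lintegral_congr fun x => hofRealΦ x
      _ = ∫⁻ y in TB, ∫⁻ x in B, ENNReal.ofReal ((R / ‖x - y‖) ^ sA * fp y) := by
          apply lintegral_lintegral_swap
          exact (ENNReal.measurable_ofReal.comp hFmeas).aemeasurable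
      _ ≤ ∫⁻ y in TB, ENNReal.ofReal (fp y) * (ENNReal.ofReal (1 + Cker n sA) * volume B) := by
          apply lintegral_mono
          intro y
          have heq : ∀ x : EuclideanSpace ℝ (Fin n),
              ENNReal.ofReal ((R / ‖x - y‖) ^ sA * fp y) =
              ENNReal.ofReal (fp y) * ENNReal.ofReal ((R / ‖x - y‖) ^ sA) := by
            intro x
            rw [← ENNReal.ofReal_mul (hfp_nn y)]
            congr 1
            ring
          calc ∫⁻ x in B, ENNReal.ofReal ((R / ‖x - y‖) ^ sA * fp y)
              = ∫⁻ x in B, ENNReal.ofReal (fp y) * ENNReal.ofReal ((R / ‖x - y‖) ^ sA) :=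
                lintegral_congr fun x => heq x
            _ = ENNReal.ofReal (fp y) * ∫⁻ x in B, ENNReal.ofReal ((R / ‖x - y‖) ^ sA) :=
                lintegral_const_mul' _ _ ENNReal.ofReal_ne_top
            _ ≤ ENNReal.ofReal (fp y) * (ENNReal.ofReal (1 + Cker n sA) * volume B) := by
                gcongr
                have := kernel_lintegral_ball_le hn hsA0 hsAn hr y x₀
                rw [hBdef, hRdef]
                exact this
      _ = (∫⁻ y in TB, ENNReal.ofReal (fp y)) * (ENNReal.ofReal (1 + Cker n sA) * volume B) :=
          lintegral_mul_const' _ _ (by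
            exact ENNReal.mul_ne_top ENNReal.ofReal_ne_top measure_ball_lt_top.ne)
      _ = ENNReal.ofReal m * (ENNReal.ofReal (1 + Cker n sA) * volume B) := by
          congr 1
          rw [← ofReal_integral_eq_lintegral_ofReal hfp_int.integrableOn
            (Filter.Eventually.of_forall hfp_nn)]
  have hI_ne_top : ENNReal.ofReal m * (ENNReal.ofReal (1 + Cker n sA) * volume B) ≠ ⊤ :=
    ENNReal.mul_ne_top ENNReal.ofReal_ne_top
      (ENNReal.mul_ne_top ENNReal.ofReal_ne_top measure_ball_lt_top.ne)
  have hΦint : IntegrableOn Φ B := by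
    constructor
    · exact hΦmeas.aestronglyMeasurable
    · rw [hasFiniteIntegral_iff_ofReal (Filter.Eventually.of_forall hΦnn)]
      exact lt_of_le_of_lt hI_le (lt_top_iff_ne_top.2 hI_ne_top)
  have hΦB : ∫ x in B, Φ x ≤ m * ((1 + Cker n sA) * (volume B).toReal) := by
    have h1 : ENNReal.ofReal (∫ x in B, Φ x) ≤
        ENNReal.ofReal m * (ENNReal.ofReal (1 + Cker n sA) * volume B) := by
      rw [ofReal_integral_eq_lintegral_ofReal hΦint (Filter.Eventually.of_forall hΦnn)]
      exact hI_le
    have h2 := ENNReal.toReal_mono hI_ne_top h1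
    rw [ENNReal.toReal_ofReal (setIntegral_nonneg measurableSet_ball fun x _ => hΦnn x),
      ENNReal.toReal_mul, ENNReal.toReal_mul, ENNReal.toReal_ofReal hm0,
      ENNReal.toReal_ofReal (by linarith)] at h2
    exact h2
  -- the main pointwise bound: exp((n/c) * IA x) ≤ 2 + Cker n sA after integration.
  -- First, Jensen's inequality pointwise (case m ≠ 0).
  set E₀ : ℝ := Real.exp ((n:ℝ) * logPot n f x₀ - ((n:ℝ)/c) * IW x₀ + ((n:ℝ)/c) * Real.log 2 * M)
    with hE₀
  have hE₀pos : 0 < E₀ := Real.exp_pos _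
  have hptwise_pre : ∀ x ∈ B,
      Real.exp ((n:ℝ) * logPot n f x) ≤ E₀ * Real.exp (((n:ℝ)/c) * IA x) := by
    intro x hx
    have h1 := hKey0 x
    have h2 := hWA x hx
    have h3 := hFar x hx
    have h4 : (n:ℝ) * logPot n f x ≤
        ((n:ℝ) * logPot n f x₀ - ((n:ℝ)/c) * IW x₀ + ((n:ℝ)/c) * Real.log 2 * M) +
          ((n:ℝ)/c) * IA x := by
      have hnc : (0:ℝ) ≤ (n:ℝ)/c := by positivity
      have h5 : ((n:ℝ)/c) * IW x ≤ ((n:ℝ)/c) * IA x := mul_le_mul_of_nonneg_left h2 hnc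
      nlinarith [h1, h3, h5]
    calc Real.exp ((n:ℝ) * logPot n f x) ≤
        Real.exp (((n:ℝ) * logPot n f x₀ - ((n:ℝ)/c) * IW x₀ + ((n:ℝ)/c) * Real.log 2 * M) +
          ((n:ℝ)/c) * IA x) := Real.exp_le_exp.2 h4
      _ = E₀ * Real.exp (((n:ℝ)/c) * IA x) := by rw [hE₀, ← Real.exp_add]
  -- final goal reduction
  have hVol : (0:ℝ) ≤ (volume B).toReal := ENNReal.toReal_nonneg
  have hRHS : coreK n A M * (volume (ball x₀ r)).toReal *
      Real.exp ((n : ℝ) * logPot n f x₀ -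
        ((n : ℝ) / cN n) * ∫ y in ball x₀ (2*r), Real.log (3*r / ‖x₀ - y‖) * f y) =
      E₀ * (2 + Cker n sA) * (volume B).toReal := by
    rw [coreK, hE₀, ← hcdef, ← hRdef, ← hTBdef, ← hBdef, ← hsA]
    rw [show (∫ y in TB, Real.log (R / ‖x₀ - y‖) * f y) = IW x₀ from rfl]
    rw [Real.exp_add]
    ring
  rw [hRHS]
  rcases eq_or_lt_of_le hm0 with hmz | hmpos
  · -- m = 0 : fp vanishes a.e. on TB, so IA x = 0
    have hfp0 : fp =ᵐ[volume.restrict TB] 0 := by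
      exact (integral_eq_zero_iff_of_nonneg
        (f := fp) (μ := volume.restrict TB)
        hfp_nn hfp_int.integrableOn).1 (by rw [← hm, ← hmz])
    have hIA0 : ∀ x, IA x = 0 := by
      intro x
      show (∫ y in TB, Real.log (R / ‖x - y‖) * fp y) = 0
      have : (fun y => Real.log (R / ‖x - y‖) * fp y) =ᵐ[volume.restrict TB] 0 := by
        filter_upwards [hfp0] with y hy
        simp [hy]
      rw [integral_congr_ae this]
      simp
    have hpt : ∀ x ∈ B, Real.exp ((n:ℝ) * logPot n f x) ≤ E₀ * (2 + Cker n sA) := by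
      intro x hx
      have := hptwise_pre x hx
      rw [hIA0 x] at this
      simp only [mul_zero, Real.exp_zero, mul_one] at this
      calc Real.exp ((n:ℝ) * logPot n f x) ≤ E₀ := this
        _ ≤ E₀ * (2 + Cker n sA) := by nlinarith [hCk_nn, hE₀pos]
    calc ∫ x in B, Real.exp ((n : ℝ) * logPot n f x)
        ≤ ∫ _ in B, E₀ * (2 + Cker n sA) := by
          apply integral_mono_of_nonneg
            (Filter.Eventually.of_forall fun x => (Real.exp_pos _).le)
            (integrableOn_const measure_ball_lt_top.ne)
          refine ((ae_restrict_iff' measurableSet_ball).2 ?_)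
          exact Filter.Eventually.of_forall hpt
      _ = E₀ * (2 + Cker n sA) * (volume B).toReal := by
          rw [setIntegral_const, smul_eq_mul, measureReal_def]
          ring
  · -- m > 0
    have hmne : m ≠ 0 := ne_of_gt hmpos
    have hJen : ∀ x : EuclideanSpace ℝ (Fin n),
        Real.exp (((n:ℝ)/c) * IA x) ≤ 1 + Φ x / m := by
      intro x
      set s' := (n:ℝ) * m / c with hs'
      have hs'0 : 0 ≤ s' := by positivity
      have hs'A : s' ≤ sA := by
        rw [hs', hsA]
        gcongr
      set w : EuclideanSpace ℝ (Fin n) → NNReal := fun y => Real.toNNReal (fp y / m) with hw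
      have hw_meas : Measurable w := (hfp_cont.measurable.div_const m).real_toNNReal
      have hwcoe : ∀ y, (w y : ℝ) = fp y / m := fun y =>
        Real.coe_toNNReal _ (div_nonneg (hfp_nn y) hm0)
      have hwint : Integrable (fun y => (w y : ℝ)) (volume.restrict TB) := by
        have : (fun y => (w y : ℝ)) = fun y => fp y / m := funext hwcoe
        rw [this]
        exact hfp_int.integrableOn.div_const m
      set μx := (volume.restrict TB).withDensity (fun y => ((w y : NNReal) : ℝ≥0∞)) with hμx
      have hwtot : ∫ y in TB, (w y : ℝ) = 1 := by
        have h1 : (fun y => (w y : ℝ)) = fun y => fp y / m := funext hwcoe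
        rw [h1, integral_div, ← hm, div_self hmne]
      have hprob : IsProbabilityMeasure μx := by
        constructor
        rw [hμx, withDensity_apply _ MeasurableSet.univ, Measure.restrict_univ,
          lintegral_coe_eq_integral w hwint, hwtot]
        simp
      have hsmul_eq : ∀ (y : EuclideanSpace ℝ (Fin n)) (t : ℝ),
          w y • t = (fp y / m) * t := by
        intro y t
        rw [NNReal.smul_def, smul_eq_mul, hwcoe]
      have hh_int : Integrable (fun y => s' * Real.log (R / ‖x - y‖)) μx := by
        rw [hμx, integrable_withDensity_iff_integrable_smul hw_meas]
        have heq : (fun y => w y • (s' * Real.log (R / ‖x - y‖))) =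
            fun y => Real.log (R / ‖x - y‖) * ((s' / m) * fp y) := by
          funext y
          rw [hsmul_eq]
          field_simp
        rw [heq]
        exact integrableOn_logKernel_mul hn (continuous_const.mul hfp_cont) hR3 x x₀ (2*r)
      have hmaj : IntegrableOn (fun y => (Mf / m) * (1 + (R / ‖x - y‖) ^ sA)) TB := by
        apply Integrable.const_mul
        apply Integrable.add (integrableOn_const measure_ball_lt_top.ne)
        have h1 := integrableOn_kernel hn hsA0 hsAn hR3 x x₀ (2*r)
        have heq : (fun z : EuclideanSpace ℝ (Fin n) => (R / ‖z - x‖) ^ sA) =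
            fun z => (R / ‖x - z‖) ^ sA := by
          funext z; rw [norm_sub_rev]
        rwa [heq] at h1
      have hexp_meas : Measurable (fun y : EuclideanSpace ℝ (Fin n) =>
          Real.exp (s' * Real.log (R / ‖x - y‖))) := by
        apply Real.measurable_exp.comp
        apply Measurable.const_mul
        exact Real.measurable_log.comp
          (measurable_const.div ((continuous_const.sub continuous_id).norm.measurable))
      have hexp_int : Integrable (fun y => Real.exp (s' * Real.log (R / ‖x - y‖))) μx := by
        rw [hμx, integrable_withDensity_iff_integrable_smul hw_meas]
        apply Integrable.mono' hmaj
        · apply AEStronglyMeasurable.mul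
          · exact (measurable_coe_nnreal_real.comp hw_meas).aestronglyMeasurable
          · exact hexp_meas.aestronglyMeasurable
        · refine ((ae_restrict_iff' measurableSet_ball).2 ?_)
          apply Filter.Eventually.of_forall
          intro y hy
          rw [hsmul_eq]
          have h1 : 0 ≤ fp y / m := div_nonneg (hfp_nn y) hm0
          have h2 : fp y / m ≤ Mf / m := by
            gcongr
            exact hfp_le y hy
          have h3 := hexp_le s' hs'0 hs'A x y
          have h4 : (0:ℝ) < Real.exp (s' * Real.log (R / ‖x - y‖)) := Real.exp_pos _
          have h5 : (0:ℝ) ≤ Mf / m := div_nonneg hMf_nn hm0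
          rw [Real.norm_eq_abs, abs_of_nonneg (mul_nonneg h1 h4.le)]
          exact mul_le_mul h2 h3 h4.le h5
      haveI := hprob
      have hInt_eq : ∫ y, s' * Real.log (R / ‖x - y‖) ∂μx = ((n:ℝ)/c) * IA x := by
        rw [hμx, integral_withDensity_eq_integral_smul hw_meas]
        have heq : (fun y => w y • (s' * Real.log (R / ‖x - y‖))) =
            fun y => ((n:ℝ)/c) * (Real.log (R / ‖x - y‖) * fp y) := by
          funext y
          rw [hsmul_eq, hs']
          field_simp
        rw [heq, integral_const_mul]
      have hexp_int_TB : IntegrableOn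
          (fun y => (fp y / m) * (1 + (R / ‖x - y‖) ^ sA)) TB := by
        apply Integrable.mono' hmaj
        · exact ((hfp_cont.measurable.div_const m).mul
            (measurable_const.add (hkermeas x))).aestronglyMeasurable
        · refine ((ae_restrict_iff' measurableSet_ball).2 ?_)
          apply Filter.Eventually.of_forall
          intro y hy
          have h1 : 0 ≤ fp y / m := div_nonneg (hfp_nn y) hm0
          have hk0 : (0:ℝ) ≤ (R / ‖x - y‖) ^ sA :=
            Real.rpow_nonneg (div_nonneg hR3.le (norm_nonneg _)) _
          have h2 : fp y / m ≤ Mf / m := by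
            gcongr
            exact hfp_le y hy
          rw [Real.norm_eq_abs, abs_of_nonneg (mul_nonneg h1 (by linarith))]
          apply mul_le_mul_of_nonneg_right h2 (by linarith)
      calc Real.exp (((n:ℝ)/c) * IA x)
          = Real.exp (∫ y, s' * Real.log (R / ‖x - y‖) ∂μx) := by rw [hInt_eq]
        _ ≤ ∫ y, Real.exp (s' * Real.log (R / ‖x - y‖)) ∂μx :=
            exp_integral_le hh_int hexp_int
        _ = ∫ y in TB, (fp y / m) * Real.exp (s' * Real.log (R / ‖x - y‖)) := by
            rw [hμx, integral_withDensity_eq_integral_smul hw_meas]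
            congr 1
            funext y
            rw [hsmul_eq]
        _ ≤ ∫ y in TB, (fp y / m) * (1 + (R / ‖x - y‖) ^ sA) := by
            apply integral_mono_of_nonneg
              (Filter.Eventually.of_forall fun y =>
                mul_nonneg (div_nonneg (hfp_nn y) hm0) (Real.exp_pos _).le)
              hexp_int_TB
            apply Filter.Eventually.of_forall
            intro y
            exact mul_le_mul_of_nonneg_left (hexp_le s' hs'0 hs'A x y)
              (div_nonneg (hfp_nn y) hm0)
        _ = 1 + Φ x / m := by
            have heq : (fun y => (fp y / m) * (1 + (R / ‖x - y‖) ^ sA)) =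
                fun y => fp y / m + ((R / ‖x - y‖) ^ sA * fp y) / m := by
              funext y
              ring
            rw [heq, integral_add (hfp_int.integrableOn.div_const m)
              ((hΦx_int x).div_const m), integral_div, integral_div, ← hm,
              div_self hmne, hΦ]
    -- integrate the pointwise bound
    have hptwise : ∀ x ∈ B, Real.exp ((n:ℝ) * logPot n f x) ≤ E₀ * (1 + Φ x / m) :=
      fun x hx => le_trans (hptwise_pre x hx)
        (mul_le_mul_of_nonneg_left (hJen x) hE₀pos.le)
    have hGint : IntegrableOn (fun x => E₀ * (1 + Φ x / m)) B := by
      apply Integrable.const_mul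
      exact (integrableOn_const measure_ball_lt_top.ne).add (hΦint.div_const m)
    calc ∫ x in B, Real.exp ((n : ℝ) * logPot n f x)
        ≤ ∫ x in B, E₀ * (1 + Φ x / m) := by
          apply integral_mono_of_nonneg
            (Filter.Eventually.of_forall fun x => (Real.exp_pos _).le) hGint
          refine ((ae_restrict_iff' measurableSet_ball).2 ?_)
          exact Filter.Eventually.of_forall hptwise
      _ = E₀ * ((volume B).toReal + (∫ x in B, Φ x) / m) := by
          rw [integral_const_mul, integral_add
            (integrableOn_const (C := (1:ℝ)) (s := B) (μ := volume) measure_ball_lt_top.ne :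
              Integrable (fun _ => (1:ℝ)) (volume.restrict B)) (hΦint.div_const m),
            setIntegral_const, integral_div, smul_eq_mul, mul_one, measureReal_def]
      _ ≤ E₀ * ((volume B).toReal + (m * ((1 + Cker n sA) * (volume B).toReal)) / m) := by
          gcongr
      _ = E₀ * (2 + Cker n sA) * (volume B).toReal := by
          rw [mul_comm m, mul_div_assoc, div_self hmne, mul_one]
          ring

lemma coreK_pos {n : ℕ} {A : ℝ} (M : ℝ) (hc : 0 < cN n) (hAc : (n:ℝ) * A / cN n < n) :
    0 < coreK n A M := by
  have h1 := Cker_nonneg hAc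
  have h2 : (0:ℝ) < Real.exp ((n / cN n) * Real.log 2 * M) := Real.exp_pos _
  rw [coreK]
  nlinarith

set_option maxHeartbeats 2000000 in
/-- Proposition 5.2. If `u = logPot f` with `α = ∫ f⁺ < c_n`
and `β = ∫ f⁻ < ∞`, then `e^{n u}` is an `A_p` weight for some `p > 1` with
constant `K`, both depending only on `n`, `α`, `β`. -/
theorem expLogPot_isAp
    (n : ℕ) (hn : 2 ≤ n) (α β : ℝ) (hα : α < cN n) :
    ∃ p K : ℝ, 1 < p ∧
      ∀ f : EuclideanSpace ℝ (Fin n) → ℝ,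
        Continuous f →
        Integrable f →
        (∀ x : EuclideanSpace ℝ (Fin n),
          Integrable (fun y => Real.log (‖y‖ / ‖x - y‖) * f y)) →
        (∫ y, max (f y) 0) = α →
        (∫ y, max (-f y) 0) = β →
        IsApWeight n p K (fun x => Real.exp ((n : ℝ) * logPot n f x)) := by
  have hn1 : 1 ≤ n := by omega
  have hc : (0:ℝ) < cN n := cN_pos hn1
  have hb0 : (0:ℝ) ≤ max β 0 / cN n := div_nonneg (le_max_right _ _) hc.le
  refine ⟨2 + max β 0 / cN n,
    coreK n (max α 0) (max α 0 + max β 0) *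
      coreK n (max β 0 / (2 + max β 0 / cN n - 1))
        ((max α 0 + max β 0) / (2 + max β 0 / cN n - 1)) ^ (2 + max β 0 / cN n - 1),
    by linarith, ?_⟩
  intro f hfc hfi hlog hα' hβ'
  intro z r hr
  beta_reduce
  have hα0 : 0 ≤ α := by
    rw [← hα']
    exact integral_nonneg fun y => le_max_right _ _
  have hβ0 : 0 ≤ β := by
    rw [← hβ']
    exact integral_nonneg fun y => le_max_right _ _
  simp only [max_eq_left hα0, max_eq_left hβ0]
  set c := cN n with hcdef
  have hpm : 2 + β / c - 1 = 1 + β / c := by ring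
  rw [hpm]
  set D := 1 + β / c with hD
  have hD0 : (0:ℝ) < D := by positivity
  set q := D⁻¹ with hq
  have hq0 : (0:ℝ) < q := by positivity
  have hqD : q * D = 1 := inv_mul_cancel₀ (ne_of_gt hD0)
  have hn1' : (1:ℝ) ≤ (n:ℝ) := by exact_mod_cast hn1
  have hnlt : ∀ {A : ℝ}, A < c → (n:ℝ) * A / c < n := by
    intro A hA
    rw [div_lt_iff₀ hc]
    nlinarith
  -- integrability facts
  have hfm_int : Integrable (fun y => max (-f y) 0) := by
    have := hfi.neg.pos_part
    simpa [max_def] using this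
  have hfp_int : Integrable (fun y => max (f y) 0) := by
    have := hfi.pos_part
    simpa [max_def] using this
  have habsf : (∫ y, |f y|) = α + β := by
    have heq : (fun y => |f y|) = fun y => max (f y) 0 + max (-f y) 0 := by
      funext y
      rcases le_total (f y) 0 with h | h
      · rw [abs_of_nonpos h, max_eq_right h, max_eq_left (by linarith)]
        ring
      · rw [abs_of_nonneg h, max_eq_left h, max_eq_right (by linarith)]
        ring
    rw [heq, integral_add hfp_int hfm_int, hα', hβ']
  -- the scaled function g
  set g : EuclideanSpace ℝ (Fin n) → ℝ := fun y => (-q) * f y with hg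
  have hgc : Continuous g := continuous_const.mul hfc
  have hgi : Integrable g := hfi.const_mul _
  have hglog : ∀ x : EuclideanSpace ℝ (Fin n),
      Integrable (fun y => Real.log (‖y‖ / ‖x - y‖) * g y) := by
    intro x
    have h1 := (hlog x).const_mul (-q)
    apply h1.congr
    apply Filter.Eventually.of_forall
    intro y
    simp only [hg]
    ring
  have hgmax : (∫ y, max (g y) 0) = q * β := by
    have heq : (fun y => max (g y) 0) = fun y => q * max (-f y) 0 := by
      funext y
      have h1 : g y = q * (-f y) := by rw [hg]; ring
      have h2 := mul_max_of_nonneg (-f y) (0:ℝ) hq0.le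
      rw [mul_zero] at h2
      rw [h1, ← h2]
    rw [heq, integral_const_mul, hβ']
  have hgabs : (∫ y, |g y|) = q * (α + β) := by
    have heq : (fun y => |g y|) = fun y => q * |f y| := by
      funext y
      rw [hg]
      rw [abs_mul, abs_neg, abs_of_nonneg hq0.le]
    rw [heq, integral_const_mul, habsf]
  have hq1 : q * β = β / D := by rw [hq, inv_mul_eq_div]
  have hq2 : q * (α + β) = (α + β) / D := by rw [hq, inv_mul_eq_div]
  have hqβc : q * β < c := by
    rw [hq1, div_lt_iff₀ hD0]
    have h1 : c * D = c + β := by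
      rw [hD]
      field_simp
    nlinarith
  -- logPot scaling
  have hgPot : ∀ x, logPot n g x = (-q) * logPot n f x := by
    intro x
    rw [logPot, logPot]
    have h2 : (∫ y, Real.log (‖y‖ / ‖x - y‖) * g y) =
        (-q) * ∫ y, Real.log (‖y‖ / ‖x - y‖) * f y := by
      rw [show (fun y => Real.log (‖y‖ / ‖x - y‖) * g y) =
          fun y => (-q) * (Real.log (‖y‖ / ‖x - y‖) * f y) from funext fun y => by
            rw [hg]; ring]
      exact integral_const_mul _ _
    rw [h2]
    ring
  -- volume
  set V := (volume (ball z r)).toReal with hV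
  have hV0 : 0 < V := by
    rw [hV]
    exact ENNReal.toReal_pos (ne_of_gt (measure_ball_pos volume z hr)) measure_ball_lt_top.ne
  set Cf := ∫ y in ball z (2*r), Real.log (3*r / ‖z - y‖) * f y with hCf
  set T := (n:ℝ) * logPot n f z - ((n:ℝ)/c) * Cf with hT
  -- apply core twice
  have hc1 := core n hn1 f hfc hfi hlog α (α+β) (le_of_eq hα') hα (le_of_eq habsf) z r hr
  rw [← hcdef, ← hV, ← hCf, ← hT] at hc1
  have hc2 := core n hn1 g hgc hgi hglog (q*β) (q*(α+β)) (le_of_eq hgmax) hqβc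
    (le_of_eq hgabs) z r hr
  rw [← hcdef, ← hV] at hc2
  have hCg : (∫ y in ball z (2*r), Real.log (3*r / ‖z - y‖) * g y) = (-q) * Cf := by
    rw [show (fun y => Real.log (3*r / ‖z - y‖) * g y) =
        fun y => (-q) * (Real.log (3*r / ‖z - y‖) * f y) from funext fun y => by
          rw [hg]; ring]
    rw [integral_const_mul, hCf]
  rw [hCg] at hc2
  have hexp2 : (n:ℝ) * logPot n g z - ((n:ℝ)/c) * ((-q) * Cf) = -(q * T) := by
    rw [hgPot z, hT]
    ring
  rw [hexp2, hq1, hq2] at hc2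
  -- rewrite the second integral
  have hI2 : (∫ y in ball z r,
      (Real.exp ((n:ℝ) * logPot n f y)) ^ (-(1 / D) : ℝ)) =
      ∫ y in ball z r, Real.exp ((n:ℝ) * logPot n g y) := by
    refine integral_congr_ae (Filter.Eventually.of_forall fun y => ?_)
    show (Real.exp ((n:ℝ) * logPot n f y)) ^ (-(1 / D) : ℝ) = Real.exp ((n:ℝ) * logPot n g y)
    rw [← Real.exp_mul]
    congr 1
    rw [hgPot y, hq]
    rw [one_div]
    ring
  rw [hI2]
  -- final chain
  set K₁ := coreK n α (α + β) with hK₁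
  set K₂ := coreK n (β / D) ((α + β) / D) with hK₂
  have hK1pos : 0 < K₁ := coreK_pos _ hc (hnlt hα)
  have hK2pos : 0 < K₂ := by
    apply coreK_pos _ hc
    apply hnlt
    rw [← hq1]
    exact hqβc
  have hI1nn : 0 ≤ ∫ y in ball z r, Real.exp ((n:ℝ) * logPot n f y) :=
    integral_nonneg fun y => (Real.exp_pos _).le
  have hI2nn : 0 ≤ ∫ y in ball z r, Real.exp ((n:ℝ) * logPot n g y) :=
    integral_nonneg fun y => (Real.exp_pos _).le
  have a₁ : V⁻¹ * (∫ y in ball z r, Real.exp ((n:ℝ) * logPot n f y)) ≤ K₁ * Real.exp T := by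
    calc V⁻¹ * (∫ y in ball z r, Real.exp ((n:ℝ) * logPot n f y))
        ≤ V⁻¹ * (K₁ * V * Real.exp T) :=
          mul_le_mul_of_nonneg_left hc1 (inv_nonneg.2 hV0.le)
      _ = K₁ * Real.exp T := by
          field_simp
  have a₂ : V⁻¹ * (∫ y in ball z r, Real.exp ((n:ℝ) * logPot n g y)) ≤
      K₂ * Real.exp (-(q * T)) := by
    calc V⁻¹ * (∫ y in ball z r, Real.exp ((n:ℝ) * logPot n g y))
        ≤ V⁻¹ * (K₂ * V * Real.exp (-(q * T))) :=
          mul_le_mul_of_nonneg_left hc2 (inv_nonneg.2 hV0.le)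
      _ = K₂ * Real.exp (-(q * T)) := by
          field_simp
  have hbase2nn : 0 ≤ V⁻¹ * (∫ y in ball z r, Real.exp ((n:ℝ) * logPot n g y)) :=
    mul_nonneg (inv_nonneg.2 hV0.le) hI2nn
  calc (V⁻¹ * ∫ y in ball z r, Real.exp ((n:ℝ) * logPot n f y)) *
      (V⁻¹ * ∫ y in ball z r, Real.exp ((n:ℝ) * logPot n g y)) ^ D
      ≤ (K₁ * Real.exp T) * (K₂ * Real.exp (-(q * T))) ^ D := by
        apply mul_le_mul a₁
          (Real.rpow_le_rpow hbase2nn a₂ hD0.le)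
          (Real.rpow_nonneg hbase2nn _)
          (mul_nonneg hK1pos.le (Real.exp_pos _).le)
    _ = K₁ * K₂ ^ D := by
        rw [Real.mul_rpow hK2pos.le (Real.exp_pos _).le, ← Real.exp_mul]
        have h3 : -(q * T) * D = -T := by
          have h4 : -(q * T) * D = -(T * (q * D)) := by ring
          rw [h4, hqD, mul_one]
        rw [h3]
        have h2 : Real.exp T * Real.exp (-T) = 1 := by
          rw [← Real.exp_add]
          simp
        linear_combination K₁ * K₂ ^ D * h2
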